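/- Fixed Point Lemma: Let P = (true, LOOP) be a linear loop program over ℝⁿ whose loop relation is defined by A·(x,x') ≤ b. Then P has a bounded infinite execution if and only if there exists a fixed point x* ∈ ℝⁿ with (x*, x*) ∈ LOOP. -/

import Mathlib

open scoped RealInnerProductSpace
open Finset Filter

noncomputable def rowL {n m : ℕ} (A : Matrix (Fin m) (Fin n ⊕ Fin n) ℝ) (i : Fin m) :
    EuclideanSpace ℝ (Fin n) := WithLp.toLp 2 (fun j => A i (Sum.inl j))

noncomputable def rowR {n m : ℕ} (A : Matrix (Fin m) (Fin n ⊕ Fin n) ℝ) (i : Fin m) :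
    EuclideanSpace ℝ (Fin n) := WithLp.toLp 2 (fun j => A i (Sum.inr j))

theorem mulVec_elim_eq {n m : ℕ} (A : Matrix (Fin m) (Fin n ⊕ Fin n) ℝ) (i : Fin m)
    (u v : EuclideanSpace ℝ (Fin n)) :
    A.mulVec (Sum.elim u v) i = ⟪rowL A i, u⟫ + ⟪rowR A i, v⟫ := by
  simp [Matrix.mulVec, dotProduct, Fintype.sum_sum_type, PiLp.inner_apply,
    RCLike.inner_apply, rowL, rowR, mul_comm]


/-- **Fixed Point Lemma.**
Let `P = (true, LOOP)` be a linear loop program over `ℝⁿ` whose loop relation is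
defined by `A·(x,x') ≤ b` (componentwise, on the stacked vector
`Sum.elim x x' : Fin n ⊕ Fin n → ℝ`).  Then `P` has a bounded infinite
execution (a sequence `(x_t)` with `(x_t, x_{t+1}) ∈ LOOP` for all `t ≥ 1` and
`‖x_t‖ ≤ d` for all `t`, in the Euclidean norm) if and only if there is a fixed
point `x*` with `(x*, x*) ∈ LOOP`. -/
theorem bounded_infinite_execution_iff_fixed_point
    (n m : ℕ)
    (A : Matrix (Fin m) (Fin n ⊕ Fin n) ℝ) (b : Fin m → ℝ) :
    (∃ x : ℕ → EuclideanSpace ℝ (Fin n),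
      (∃ d : ℝ, ∀ t : ℕ, ‖x t‖ ≤ d) ∧
      (∀ t : ℕ, 1 ≤ t → ∀ i, A.mulVec (Sum.elim (x t) (x (t + 1))) i ≤ b i))
    ↔ (∃ xstar : EuclideanSpace ℝ (Fin n),
        ∀ i, A.mulVec (Sum.elim xstar xstar) i ≤ b i) := by
  constructor
  · rintro ⟨x, ⟨d, hd⟩, hx⟩
    have hd0 : 0 ≤ d := le_trans (norm_nonneg _) (hd 0)
    -- Cesàro averages
    set y : ℕ → EuclideanSpace ℝ (Fin n) :=
      fun N => (N : ℝ)⁻¹ • ∑ t ∈ Finset.range N, x (t + 1) with hy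
    have hyball : ∀ N, y N ∈ Metric.closedBall (0 : EuclideanSpace ℝ (Fin n)) d := by
      intro N
      rw [Metric.mem_closedBall, dist_zero_right]
      have h1 : ‖y N‖ = (N : ℝ)⁻¹ * ‖∑ t ∈ Finset.range N, x (t + 1)‖ := by
        rw [hy, norm_smul, Real.norm_eq_abs, abs_of_nonneg (inv_nonneg.2 (Nat.cast_nonneg N))]
      have h2 : ‖∑ t ∈ Finset.range N, x (t + 1)‖ ≤ (N : ℝ) * d := by
        calc ‖∑ t ∈ Finset.range N, x (t + 1)‖ ≤ ∑ t ∈ Finset.range N, ‖x (t + 1)‖ :=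
              norm_sum_le _ _
          _ ≤ ∑ _t ∈ Finset.range N, d := Finset.sum_le_sum fun t _ => hd (t + 1)
          _ = (N : ℝ) * d := by simp [mul_comm]
      rcases Nat.eq_zero_or_pos N with h | h
      · subst h
        rw [h1]
        simpa using hd0
      · have hNpos : (0 : ℝ) < N := by exact_mod_cast h
        rw [h1]
        calc (N : ℝ)⁻¹ * ‖∑ t ∈ Finset.range N, x (t + 1)‖ ≤ (N : ℝ)⁻¹ * ((N : ℝ) * d) := by
              gcongr
          _ = d := by field_simp
    set C : Fin m → ℝ := fun i => 2 * (‖rowR A i‖ * d) with hC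
    have key : ∀ N : ℕ, 1 ≤ N → ∀ i,
        A.mulVec (Sum.elim (y N) (y N)) i ≤ b i + (N : ℝ)⁻¹ * C i := by
      intro N hN i
      have hNpos : (0 : ℝ) < N := by exact_mod_cast hN
      rw [mulVec_elim_eq]
      have hL : ⟪rowL A i, y N⟫ = (N : ℝ)⁻¹ * ∑ t ∈ Finset.range N, ⟪rowL A i, x (t + 1)⟫ := by
        rw [hy, real_inner_smul_right, inner_sum]
      have hR : ⟪rowR A i, y N⟫ = (N : ℝ)⁻¹ * ∑ t ∈ Finset.range N, ⟪rowR A i, x (t + 1)⟫ := by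
        rw [hy, real_inner_smul_right, inner_sum]
      -- index shift for the R part
      set f : ℕ → ℝ := fun t => ⟪rowR A i, x (t + 1)⟫ with hf
      have hshift : ∑ t ∈ Finset.range N, f t
          = ∑ t ∈ Finset.range N, f (t + 1) + f 0 - f N := by
        have e1 : ∑ t ∈ Finset.range (N + 1), f t
            = ∑ t ∈ Finset.range N, f (t + 1) + f 0 := Finset.sum_range_succ' f N
        have e2 : ∑ t ∈ Finset.range (N + 1), f t
            = ∑ t ∈ Finset.range N, f t + f N := Finset.sum_range_succ f N
        linarith [e1, e2]
      -- sum of constraints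
      have hsum : ∑ t ∈ Finset.range N, (⟪rowL A i, x (t + 1)⟫ + f (t + 1)) ≤ (N : ℝ) * b i := by
        calc ∑ t ∈ Finset.range N, (⟪rowL A i, x (t + 1)⟫ + f (t + 1))
            ≤ ∑ _t ∈ Finset.range N, b i := by
              refine Finset.sum_le_sum fun t _ => ?_
              have := hx (t + 1) (Nat.le_add_left 1 t) i
              rw [mulVec_elim_eq] at this
              exact this
          _ = (N : ℝ) * b i := by simp [mul_comm]
      have hfb : ∀ s : ℕ, |f s| ≤ ‖rowR A i‖ * d := by
        intro s
        calc |f s| ≤ ‖rowR A i‖ * ‖x (s + 1)‖ := abs_real_inner_le_norm _ _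
          _ ≤ ‖rowR A i‖ * d := by
              exact mul_le_mul_of_nonneg_left (hd (s + 1)) (norm_nonneg _)
      have h0 : f 0 - f N ≤ C i := by
        have := abs_le.1 (hfb 0)
        have := abs_le.1 (hfb N)
        rw [hC]
        dsimp only
        linarith [(abs_le.1 (hfb 0)).2, (abs_le.1 (hfb N)).1]
      calc ⟪rowL A i, y N⟫ + ⟪rowR A i, y N⟫
          = (N : ℝ)⁻¹ * (∑ t ∈ Finset.range N, (⟪rowL A i, x (t + 1)⟫ + f (t + 1))
              + (f 0 - f N)) := by
            rw [hL, hR, hshift]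
            rw [Finset.sum_add_distrib]
            ring
        _ ≤ (N : ℝ)⁻¹ * ((N : ℝ) * b i + C i) := by
            apply mul_le_mul_of_nonneg_left _ (inv_nonneg.2 hNpos.le)
            linarith [hsum, h0]
        _ = b i + (N : ℝ)⁻¹ * C i := by
            field_simp
    -- extract a convergent subsequence
    obtain ⟨a, ha, φ, hφ, hconv⟩ :=
      (isCompact_closedBall (0 : EuclideanSpace ℝ (Fin n)) d).tendsto_subseq hyball
    refine ⟨a, fun i => ?_⟩
    rw [mulVec_elim_eq]
    have hcont : Continuous fun z : EuclideanSpace ℝ (Fin n) =>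
        ⟪rowL A i, z⟫ + ⟪rowR A i, z⟫ :=
      (continuous_const.inner continuous_id).add (continuous_const.inner continuous_id)
    have hlim1 : Tendsto (fun k => ⟪rowL A i, y (φ k)⟫ + ⟪rowR A i, y (φ k)⟫) atTop
        (nhds (⟪rowL A i, a⟫ + ⟪rowR A i, a⟫)) := (hcont.tendsto a).comp hconv
    have hlim2 : Tendsto (fun k => b i + ((φ k : ℝ))⁻¹ * C i) atTop (nhds (b i)) := by
      have hinv : Tendsto (fun k => ((φ k : ℝ))⁻¹) atTop (nhds 0) :=
        tendsto_inv_atTop_zero.comp (tendsto_natCast_atTop_atTop.comp hφ.tendsto_atTop)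
      have h2 := Filter.Tendsto.add (tendsto_const_nhds (x := b i)) (hinv.mul_const (C i))
      simpa using h2
    refine le_of_tendsto_of_tendsto hlim1 hlim2 ?_
    filter_upwards [eventually_ge_atTop 1] with k hk
    have h1 : 1 ≤ φ k := le_trans hk hφ.le_apply
    have := key (φ k) h1 i
    rw [mulVec_elim_eq] at this
    exact this
  · rintro ⟨xs, hxs⟩
    exact ⟨fun _ => xs, ⟨‖xs‖, fun _ => le_refl _⟩, fun _ _ i => hxs i⟩
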